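/- Let Σ = {a,b,c} and let A_{//a[.//b]} be the BDSTA over Σ with states Q = {q₀,q₁}, top states 𝒯 = {q₀,q₁}, bottom states ℬ = {q₀}, selecting configurations 𝒮 = {(q₁,a)}, and transitions (q₁,{b},q₀,q₀), (q₁,{b},q₀,q₁), (q₀,{a,c},q₀,q₀), (q₀,{a,c},q₀,q₁), (q₁,{a},q₁,q₀), (q₁,{a},q₁,q₁), (q₁,{b,c},q₁,q₀), (q₁,{b,c},q₁,q₁). Then there is no top-down deterministic selecting tree automaton (TDSTA) A' over Σ with A' ≡ A_{//a[.//b]}. -/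

import Mathlib

/-- Binary trees over an alphabet `σ`: `leaf` is the leaf symbol `#`. -/
inductive BTree (σ : Type) : Type where
  | leaf : BTree σ
  | node : σ → BTree σ → BTree σ → BTree σ

namespace BTree

/-- `mem π t` : the node `π` (a sequence over `{1,2}`, here `Bool` with
`false` = first child, `true` = second child) belongs to `dom t`. -/
def mem {σ : Type} : List Bool → BTree σ → Prop
  | [], _ => True
  | _ :: _, .leaf => False
  | false :: π, .node _ t1 _ => mem π t1
  | true :: π, .node _ _ t2 => mem π t2

/-- The label of `t` at node `π`: `some l` if `t(π) = l ∈ σ`,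
and `none` if `t(π) = #` or `π ∉ dom t`. -/
def labelAt {σ : Type} : BTree σ → List Bool → Option σ
  | .leaf, _ => none
  | .node l _ _, [] => some l
  | .node _ t1 _, false :: π => labelAt t1 π
  | .node _ _ t2, true :: π => labelAt t2 π

end BTree

/-- A selecting tree automaton (STA) over alphabet `σ` with states `Q`:
top states, bottom states, selecting configurations and transitions
`(q, L, q₁, q₂)` with `L ⊆ σ`. -/
structure STA (σ Q : Type) where
  top : Set Q
  bot : Set Q
  sel : Set (Q × σ)
  delta : Set (Q × Set σ × Q × Q)

namespace STA

variable {σ Q : Type}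

/-- Destination states: `δ(q,l) = {(q',q'') | ∃ L, l ∈ L ∧ (q,L,q',q'') ∈ δ}`. -/
def dst (A : STA σ Q) (q : Q) (l : σ) : Set (Q × Q) :=
  {p | ∃ L, l ∈ L ∧ (q, L, p.1, p.2) ∈ A.delta}

/-- Source states: `δ(q₁,q₂,l) = {q | ∃ L, l ∈ L ∧ (q,L,q₁,q₂) ∈ δ}`. -/
def src (A : STA σ Q) (q1 q2 : Q) (l : σ) : Set Q :=
  {q | ∃ L, l ∈ L ∧ (q, L, q1, q2) ∈ A.delta}

/-- `R` is a run of `A` over `t`. -/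
def IsRun (A : STA σ Q) (t : BTree σ) (R : List Bool → Q) : Prop :=
  ∀ π l, t.labelAt π = some l →
    R π ∈ A.src (R (π ++ [false])) (R (π ++ [true])) l

/-- `R` is an accepting run of `A` over `t`. -/
def Accepting (A : STA σ Q) (t : BTree σ) (R : List Bool → Q) : Prop :=
  A.IsRun t R ∧ R [] ∈ A.top ∧
    ∀ π, BTree.mem π t → t.labelAt π = none → R π ∈ A.bot

/-- The language of `A`. -/
def lang (A : STA σ Q) : Set (BTree σ) := {t | ∃ R, A.Accepting t R}

/-- The set of nodes of `t` selected by `A`. -/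
def selected (A : STA σ Q) (t : BTree σ) : Set (List Bool) :=
  {π | ∃ R l, A.Accepting t R ∧ t.labelAt π = some l ∧ (R π, l) ∈ A.sel}

/-- `A` is top-down deterministic. -/
def TDDet (A : STA σ Q) : Prop :=
  (∃ q, A.top = {q}) ∧ ∀ q l, ∃ p, A.dst q l = {p}

/-- `A` is bottom-up deterministic. -/
def BUDet (A : STA σ Q) : Prop :=
  (∃ q, A.bot = {q}) ∧ ∀ q1 q2 l, ∃ q, A.src q1 q2 l = {q}

/-- `A` is top-down complete. -/
def TDComplete (A : STA σ Q) : Prop := ∀ q l, (A.dst q l).Nonempty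

/-- `A` is bottom-up complete. -/
def BUComplete (A : STA σ Q) : Prop := ∀ q1 q2 l, (A.src q1 q2 l).Nonempty

/-- One-step reachability between states. -/
def step (A : STA σ Q) (p p' : Q) : Prop :=
  ∃ L q1 q2, (p, L, q1, q2) ∈ A.delta ∧ (p' = q1 ∨ p' = q2)

/-- Reachability between states. -/
def reach (A : STA σ Q) : Q → Q → Prop := Relation.ReflTransGen A.step

/-- `A[q]` : the restriction of `A` to the state `q`
(top states become `{q}` and everything is restricted to states reachable from `q`). -/
def restrict (A : STA σ Q) (q : Q) : STA σ Q where
  top := {q}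
  bot := {p | p ∈ A.bot ∧ A.reach q p}
  sel := {ps | ps ∈ A.sel ∧ A.reach q ps.1}
  delta := {tr | tr ∈ A.delta ∧ A.reach q tr.1}

/-- A state is non-changing if `δ(q,l) = {(q,q)}` for every label. -/
def NonChanging (A : STA σ Q) (q : Q) : Prop := ∀ l, A.dst q l = {(q, q)}

/-- Top-down universal state. -/
def TDUniversal (A : STA σ Q) (q : Q) : Prop := A.NonChanging q ∧ q ∈ A.bot

/-- Top-down sink state. -/
def TDSink (A : STA σ Q) (q : Q) : Prop := A.NonChanging q ∧ q ∉ A.bot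

end STA

/-- Equivalence of STAs: same language and same selected nodes on every tree. -/
def STAEquiv {σ Q Q' : Type} (A : STA σ Q) (B : STA σ Q') : Prop :=
  A.lang = B.lang ∧ ∀ t, A.selected t = B.selected t

/-- `A` is a minimal top-down complete TDSTA: no equivalent top-down complete
TDSTA has strictly fewer states. -/
def MinimalTD {σ Q : Type} (A : STA σ Q) : Prop :=
  A.TDDet ∧ A.TDComplete ∧
    ∀ (Q' : Type) [Finite Q'], ∀ B : STA σ Q',
      B.TDDet → B.TDComplete → STAEquiv B A → Nat.card Q ≤ Nat.card Q'

/-- `A` is a minimal bottom-up complete BDSTA. -/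
def MinimalBU {σ Q : Type} (A : STA σ Q) : Prop :=
  A.BUDet ∧ A.BUComplete ∧
    ∀ (Q' : Type) [Finite Q'], ∀ B : STA σ Q',
      B.BUDet → B.BUComplete → STAEquiv B A → Nat.card Q ≤ Nat.card Q'

/-- `B` behaves like `A_⊤`: it accepts every tree and selects no node. -/
def IsTopSTA {σ Q : Type} (B : STA σ Q) : Prop :=
  B.lang = Set.univ ∧ ∀ t, B.selected t = ∅

/-- The three-letter alphabet `Σ = {a, b, c}`. -/
inductive ABC : Type where
  | a | b | c
deriving DecidableEq

instance : Fintype ABC where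
  elems := {ABC.a, ABC.b, ABC.c}
  complete := by intro x; cases x <;> simp

/-- The TDSTA `A_{//a//b}` (states `q₀ = false`, `q₁ = true`). -/
def Aab : STA ABC Bool where
  top := {false}
  bot := Set.univ
  sel := {(true, ABC.b)}
  delta := {(false, ({ABC.a} : Set ABC), true, false),
            (false, ({ABC.b, ABC.c} : Set ABC), false, false),
            (true, (Set.univ : Set ABC), true, true)}

/-- The BDSTA `A_{//a[.//b]}` (states `q₀ = false`, `q₁ = true`). -/
def Aafb : STA ABC Bool where
  top := Set.univ
  bot := {false}
  sel := {(true, ABC.a)}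
  delta := {(true, ({ABC.b} : Set ABC), false, false),
            (true, ({ABC.b} : Set ABC), false, true),
            (false, ({ABC.a, ABC.c} : Set ABC), false, false),
            (false, ({ABC.a, ABC.c} : Set ABC), false, true),
            (true, ({ABC.a} : Set ABC), true, false),
            (true, ({ABC.a} : Set ABC), true, true),
            (true, ({ABC.b, ABC.c} : Set ABC), true, false),
            (true, ({ABC.b, ABC.c} : Set ABC), true, true)}

/-- tree `a(b(#,#),#)` -/
def tab : BTree ABC := .node .a (.node .b .leaf .leaf) .leaf

/-- tree `a(#,#)` -/
def ta : BTree ABC := .node .a .leaf .leaf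

lemma sel_tab : [] ∈ Aafb.selected tab := by
  refine ⟨fun π => decide (π = [] ∨ π = [false]), .a, ⟨?_, ?_, ?_⟩, rfl, ?_⟩
  · intro π l h
    match π with
    | [] =>
      simp only [tab, BTree.labelAt, Option.some.injEq] at h
      subst h
      exact ⟨{ABC.a}, by simp, by simp [Aafb]⟩
    | false :: π =>
      match π with
      | [] =>
        simp only [tab, BTree.labelAt, Option.some.injEq] at h
        subst h
        exact ⟨{ABC.b}, by simp, by simp [Aafb]⟩
      | x :: π => cases x <;> simp [tab, BTree.labelAt] at h
    | true :: π => simp [tab, BTree.labelAt] at h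
  · simp [Aafb]
  · intro π hmem hlab
    match π with
    | [] => simp [tab, BTree.labelAt] at hlab
    | false :: π =>
      match π with
      | [] => simp [tab, BTree.labelAt] at hlab
      | x :: π => cases x <;> simp [Aafb]
    | true :: π => simp [Aafb]
  · simp [Aafb]

lemma not_sel_ta : [] ∉ Aafb.selected ta := by
  rintro ⟨R, l, ⟨hrun, -, hbot⟩, hlab, hsel⟩
  simp only [ta, BTree.labelAt, Option.some.injEq] at hlab
  subst hlab
  have hR : R [] = true := by
    have := hsel; simp only [Aafb, Set.mem_singleton_iff, Prod.mk.injEq] at this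
    exact this.1
  have hRf : R [false] = false := by
    have := hbot [false] (by trivial) (by simp [ta, BTree.labelAt])
    simpa [Aafb] using this
  have := hrun [] ABC.a rfl
  obtain ⟨L, hL, hmem⟩ := this
  simp only [Aafb, Set.mem_insert_iff, Set.mem_singleton_iff, Prod.mk.injEq] at hmem
  rcases hmem with ⟨h1, h2, h3, -⟩ | ⟨h1, h2, h3, -⟩ | ⟨h1, h2, h3, -⟩ | ⟨h1, h2, h3, -⟩ |
    ⟨h1, h2, h3, -⟩ | ⟨h1, h2, h3, -⟩ | ⟨h1, h2, h3, -⟩ | ⟨h1, h2, h3, -⟩ <;>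
    first
    | (rw [hRf] at h3; exact Bool.false_ne_true h3)
    | (rw [h2] at hL; simp only [Set.mem_singleton_iff, Set.mem_insert_iff] at hL;
       first
       | exact (by cases hL <;> simp_all : False)
       | simp_all)

lemma ta_mem_lang : ta ∈ Aafb.lang := by
  refine ⟨fun _ => false, ?_, by simp [Aafb], ?_⟩
  · intro π l h
    match π with
    | [] =>
      simp only [ta, BTree.labelAt, Option.some.injEq] at h
      subst h
      exact ⟨{ABC.a, ABC.c}, by simp, by simp [Aafb]⟩
    | x :: π => cases x <;> simp [ta, BTree.labelAt] at h
  · intro π _ _; simp [Aafb]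

/-- no TDSTA is equivalent to `A_{//a[.//b]}`. -/
theorem stmt3 :
    ∀ (Q' : Type) [Finite Q'], ∀ B : STA ABC Q', B.TDDet → ¬ STAEquiv B Aafb := by
  intro Q' _ B hdet ⟨hlang, hselEq⟩
  obtain ⟨⟨q0, htop⟩, -⟩ := hdet
  -- root is selected in tab by B
  have h1 : [] ∈ B.selected tab := by rw [hselEq]; exact sel_tab
  obtain ⟨R1, l, hacc1, hlab1, hs1⟩ := h1
  simp only [tab, BTree.labelAt, Option.some.injEq] at hlab1
  subst hlab1
  have hR1 : R1 [] = q0 := by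
    have := hacc1.2.1; rw [htop] at this; exact this
  rw [hR1] at hs1
  -- ta is accepted by B
  have h2 : ta ∈ B.lang := by rw [hlang]; exact ta_mem_lang
  obtain ⟨R2, hacc2⟩ := h2
  have hR2 : R2 [] = q0 := by
    have := hacc2.2.1; rw [htop] at this; exact this
  have h3 : [] ∈ B.selected ta := ⟨R2, .a, hacc2, rfl, by rw [hR2]; exact hs1⟩
  rw [hselEq] at h3
  exact not_sel_ta h3
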